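/- Let f : ℝ × ZMod 2 → ℂ be defined by f(s, 0) = exp(−σs² + iβs) and f(s, 1) = κ·exp(−σ's² + iβ's), where σ, σ' ≥ 0 and β, β', κ ∈ ℝ. Then f is the Fourier transform (characteristic function) of the signed measure μ on ℝ × ZMod 2 given on Borel sets B ⊆ ℝ by μ(B × {0}) = ½(γ_σ * δ_β + κ·γ_{σ'} * δ_{β'})(B) and μ(B × {1}) = ½(γ_σ * δ_β − κ·γ_{σ'} * δ_{β'})(B), where γ_a denotes the Gaussian measure on ℝ with density (1/(2√(πa)))·exp(−t²/(4a)) (and γ_0 = δ_0). -/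

import Mathlib

open MeasureTheory Complex
open scoped ENNReal

/-- The Gaussian measure `γ_a` on `ℝ` with density `(1/(2√(πa)))·exp(−t²/(4a))`
for `a > 0`, and `γ_0 = δ_0`. -/
noncomputable def gaussMeasure (a : ℝ) : Measure ℝ :=
  if a = 0 then Measure.dirac 0
  else volume.withDensity
    (fun t => ENNReal.ofReal (1 / (2 * Real.sqrt (Real.pi * a)) * Real.exp (-t ^ 2 / (4 * a))))

lemma gauss_char_aux (a β : ℝ) (ha : 0 ≤ a) (s : ℝ) :
    ∫ t : ℝ, Complex.exp (I * t * s) ∂((gaussMeasure a).map (· + β)) =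
      Complex.exp (-(a : ℂ) * s ^ 2 + I * β * s) := by
  rw [integral_map (by fun_prop)
    (Continuous.aestronglyMeasurable (by continuity))]
  rcases eq_or_lt_of_le ha with rfl | ha'
  · rw [gaussMeasure, if_pos rfl, integral_dirac]
    congr 1
    push_cast
    ring
  · rw [gaussMeasure, if_neg ha'.ne']
    have hsqrt : 0 < Real.sqrt (Real.pi * a) :=
      Real.sqrt_pos.mpr (by positivity)
    set c₀ : ℝ := 1 / (2 * Real.sqrt (Real.pi * a)) with hc₀
    have hc₀pos : 0 < c₀ := by positivity
    have hmeas : Measurable fun t : ℝ =>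
        Real.toNNReal (c₀ * Real.exp (-t ^ 2 / (4 * a))) := by
      fun_prop
    have : (fun t : ℝ => ENNReal.ofReal (c₀ * Real.exp (-t ^ 2 / (4 * a)))) =
        fun t : ℝ => ((Real.toNNReal (c₀ * Real.exp (-t ^ 2 / (4 * a)))) : ℝ≥0∞) := rfl
    rw [this, integral_withDensity_eq_integral_smul hmeas]
    have hx : ∀ t : ℝ,
        (Real.toNNReal (c₀ * Real.exp (-t ^ 2 / (4 * a)))) • Complex.exp (I * ((t + β : ℝ) : ℂ) * s)
          = (c₀ : ℂ) * Complex.exp (-(1 / (4 * (a : ℂ))) * t ^ 2 + (I * s) * t + I * β * s) := by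
      intro t
      have hnn : 0 ≤ c₀ * Real.exp (-t ^ 2 / (4 * a)) := by positivity
      have ha0 : (a : ℂ) ≠ 0 := by exact_mod_cast ha'.ne'
      rw [NNReal.smul_def, Real.coe_toNNReal _ hnn, Complex.real_smul]
      push_cast
      rw [mul_assoc, ← Complex.exp_add]
      congr 2
      field_simp
      ring
    simp_rw [hx]
    rw [integral_const_mul,
      integral_cexp_quadratic (b := -(1 / (4 * (a : ℂ)))) (by
        simp only [neg_re, neg_neg]
        rw [show (1 / (4 * (a : ℂ))) = ((1 / (4 * a) : ℝ) : ℂ) by push_cast; ring]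
        simpa using by positivity) (I * s) (I * β * s)]
    have ha0 : (a : ℂ) ≠ 0 := by exact_mod_cast ha'.ne'
    have h1 : (↑Real.pi / -(-(1 / (4 * (a : ℂ))))) = ((4 * Real.pi * a : ℝ) : ℂ) := by
      push_cast
      field_simp
    have h2 : ((4 * Real.pi * a : ℝ) : ℂ) ^ (1 / 2 : ℂ) =
        ((2 * Real.sqrt (Real.pi * a) : ℝ) : ℂ) := by
      rw [show (1 / 2 : ℂ) = ((1 / 2 : ℝ) : ℂ) by push_cast; ring,
        ← Complex.ofReal_cpow (by positivity)]
      congr 1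
      rw [← Real.sqrt_eq_rpow, show (4 * Real.pi * a : ℝ) = 4 * (Real.pi * a) by ring,
        Real.sqrt_mul (by norm_num : (0:ℝ) ≤ 4),
        show (4 : ℝ) = 2 ^ 2 by norm_num, Real.sqrt_sq (by norm_num : (0:ℝ) ≤ 2)]
    have h3 : (I * ↑β * ↑s - (I * ↑s) ^ 2 / (4 * -(1 / (4 * (a : ℂ))))) =
        -(a : ℂ) * s ^ 2 + I * β * s := by
      field_simp
      linear_combination ((s : ℂ) ^ 2 * a) * I_sq
    rw [h1, h2, h3]
    have hs0 : ((2 * Real.sqrt (Real.pi * a) : ℝ) : ℂ) ≠ 0 := by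
      exact_mod_cast (by positivity : (2 * Real.sqrt (Real.pi * a) : ℝ) ≠ 0)
    rw [hc₀, ← mul_assoc, ← Complex.ofReal_mul,
      show (1 / (2 * Real.sqrt (Real.pi * a)) * (2 * Real.sqrt (Real.pi * a))) = 1 by
        field_simp]
    simp

/-- The characteristic function of the signed measure `μ` on `ℝ × ZMod 2` whose slices are
`λ₀ = ½(γ_σ*δ_β + κ·γ_{σ'}*δ_{β'})` on `ℝ × {0}` and
`λ₁ = ½(γ_σ*δ_β − κ·γ_{σ'}*δ_{β'})` on `ℝ × {1}`;
the characteristic function `μ̂(s,l) = ∫ e^{its}(−1)^{kl} dμ(t,k)` is written out by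
linearity of the integral in the signed measure. -/
theorem char_fun_of_signed_measure (σ σ' β β' κ : ℝ) (hσ : 0 ≤ σ) (hσ' : 0 ≤ σ') :
    let ν₁ : Measure ℝ := (gaussMeasure σ).map (· + β)   -- γ_σ * δ_β
    let ν₂ : Measure ℝ := (gaussMeasure σ').map (· + β') -- γ_{σ'} * δ_{β'}
    ∀ (s : ℝ) (l : ZMod 2),
      -- ∫_{ℝ×{0}} e^{its} dλ₀, expanded by linearity
      ((1 : ℂ) / 2) * ((∫ t : ℝ, Complex.exp (I * t * s) ∂ν₁) +
          κ * ∫ t : ℝ, Complex.exp (I * t * s) ∂ν₂) +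
      -- ∫_{ℝ×{1}} e^{its}(−1)^l dλ₁, expanded by linearity
      (-1 : ℂ) ^ l.val * (((1 : ℂ) / 2) * ((∫ t : ℝ, Complex.exp (I * t * s) ∂ν₁) -
          κ * ∫ t : ℝ, Complex.exp (I * t * s) ∂ν₂)) =
        if l = 0 then Complex.exp (-(σ : ℂ) * s ^ 2 + I * β * s)
        else κ * Complex.exp (-(σ' : ℂ) * s ^ 2 + I * β' * s) := by
  intro ν₁ ν₂ s l
  rw [show ν₁ = (gaussMeasure σ).map (· + β) from rfl,
    show ν₂ = (gaussMeasure σ').map (· + β') from rfl,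
    gauss_char_aux σ β hσ s, gauss_char_aux σ' β' hσ' s]
  obtain rfl | rfl : l = 0 ∨ l = 1 := by revert l; decide
  all_goals norm_num [ZMod.val_one] <;> ring
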